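/- The invariant density of the weak-effects limit satisfies the zero-flux equation of the limiting Fokker–Planck equation: for real parameters θ₁, θ₂ and N₁, N₂ > 0, and every x ∈ (0, 1), the function x ↦ x(1−x)·w(x) is differentiable at x with derivative equal to ( ((θ₁+θ₂)x − θ₁)·x·(1−x) − (N₁+N₂)x + N₁ )·w(x), where w(x) = exp(½(θ₁+θ₂)x² − θ₁x)·x^{N₁−1}(1−x)^{N₂−1}. -/

import Mathlib

/-- Unnormalized invariant density of the weak-effects limit of the zealot
model with reinforcement. -/
noncomputable def w (θ₁ θ₂ N₁ N₂ x : ℝ) : ℝ :=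
  Real.exp ((1 / 2) * (θ₁ + θ₂) * x ^ 2 - θ₁ * x) * x ^ (N₁ - 1) * (1 - x) ^ (N₂ - 1)

/-- The invariant density satisfies the zero-flux equation of the limiting
Fokker–Planck equation: for every `x ∈ (0,1)`, the function
`x ↦ x(1−x)w(x)` is differentiable at `x` with derivative
`(((θ₁+θ₂)x − θ₁)x(1−x) − (N₁+N₂)x + N₁)·w(x)`. -/
theorem invariant_density_zero_flux (θ₁ θ₂ N₁ N₂ : ℝ) (hN₁ : 0 < N₁) (hN₂ : 0 < N₂)
    (x : ℝ) (hx : x ∈ Set.Ioo (0 : ℝ) 1) :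
    HasDerivAt (fun y : ℝ => y * (1 - y) * w θ₁ θ₂ N₁ N₂ y)
      ((((θ₁ + θ₂) * x - θ₁) * x * (1 - x) - (N₁ + N₂) * x + N₁) * w θ₁ θ₂ N₁ N₂ x)
      x := by
  obtain ⟨hx0, hx1'⟩ := hx
  have hx1 : 0 < 1 - x := by linarith
  -- inner polynomial
  have hpoly : HasDerivAt (fun y : ℝ => (1 / 2) * (θ₁ + θ₂) * y ^ 2 - θ₁ * y)
      ((θ₁ + θ₂) * x - θ₁) x := by
    have h1 := ((hasDerivAt_pow 2 x).const_mul ((1 / 2) * (θ₁ + θ₂))).sub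
      ((hasDerivAt_id x).const_mul θ₁)
    refine h1.congr_deriv ?_
    simp only [Nat.cast_ofNat, pow_one, show (2:ℕ) - 1 = 1 from rfl]
    ring
  have hE := hpoly.exp
  have hP : HasDerivAt (fun y : ℝ => y ^ N₁) (N₁ * x ^ (N₁ - 1)) x :=
    Real.hasDerivAt_rpow_const (Or.inl hx0.ne')
  have hQ : HasDerivAt (fun y : ℝ => (1 - y) ^ N₂) (-(N₂ * (1 - x) ^ (N₂ - 1))) x := by
    have hs : HasDerivAt (fun y : ℝ => 1 - y) (-1) x := by
      exact ((hasDerivAt_const x (1 : ℝ)).sub (hasDerivAt_id x)).congr_deriv (by ring)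
    have := (Real.hasDerivAt_rpow_const (p := N₂) (Or.inl hx1.ne')).comp x hs
    refine this.congr_deriv ?_
    ring
  have hD := (hE.mul hP).mul hQ
  have heq : (fun y : ℝ => y * (1 - y) * w θ₁ θ₂ N₁ N₂ y) =ᶠ[nhds x]
      (fun y : ℝ => Real.exp ((1 / 2) * (θ₁ + θ₂) * y ^ 2 - θ₁ * y) * y ^ N₁ * (1 - y) ^ N₂) := by
    filter_upwards [isOpen_Ioo.mem_nhds (⟨hx0, hx1'⟩ : x ∈ Set.Ioo (0:ℝ) 1)] with y hy
    obtain ⟨hy0, hy1'⟩ := hy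
    have hy1 : (0 : ℝ) < 1 - y := by linarith
    have e1 : y ^ N₁ = y * y ^ (N₁ - 1) := by
      have h := Real.rpow_add hy0 1 (N₁ - 1)
      rw [Real.rpow_one, show (1:ℝ) + (N₁ - 1) = N₁ by ring] at h
      exact h
    have e2 : (1 - y) ^ N₂ = (1 - y) * (1 - y) ^ (N₂ - 1) := by
      have h := Real.rpow_add hy1 1 (N₂ - 1)
      rw [Real.rpow_one, show (1:ℝ) + (N₂ - 1) = N₂ by ring] at h
      exact h
    simp only [w, e1, e2]
    ring
  have := hD.congr_of_eventuallyEq heq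
  refine this.congr_deriv ?_
  have e1 : x ^ N₁ = x * x ^ (N₁ - 1) := by
    have h := Real.rpow_add hx0 1 (N₁ - 1)
    rw [Real.rpow_one, show (1:ℝ) + (N₁ - 1) = N₁ by ring] at h
    exact h
  have e2 : (1 - x) ^ N₂ = (1 - x) * (1 - x) ^ (N₂ - 1) := by
    have h := Real.rpow_add hx1 1 (N₂ - 1)
    rw [Real.rpow_one, show (1:ℝ) + (N₂ - 1) = N₂ by ring] at h
    exact h
  simp only [w, e1, e2, Pi.mul_apply]
  ring
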